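/- The SU(2)-orbit description and the real description of the Chiang-type lagrangian coincide: the set { [ᾱ²+β̄² : √2(ᾱβ−αβ̄) : α²+β²] ∈ ℙ(ℂ³) : α,β ∈ ℂ, |α|²+|β|²=1 } is equal to the set { [X−iY : √2·i·Z : X+iY] ∈ ℙ(ℂ³) : X,Y,Z ∈ ℝ, X²+Y²+Z²=1 }. -/

import Mathlib

open Complex

/-- The vector `(X - iY, √2 i Z, X + iY)` in `ℂ³`. -/
noncomputable def sphereVec (X Y Z : ℝ) : Fin 3 → ℂ :=
  ![(X : ℂ) - Complex.I * Y, (Real.sqrt 2 : ℂ) * Complex.I * Z, (X : ℂ) + Complex.I * Y]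

lemma sphereVec_ne_zero {X Y Z : ℝ} (h : X ^ 2 + Y ^ 2 + Z ^ 2 = 1) :
    sphereVec X Y Z ≠ 0 := by
  intro h0
  have h0' : (X : ℂ) - Complex.I * Y = 0 := congrFun h0 0
  have h2' : (X : ℂ) + Complex.I * Y = 0 := congrFun h0 2
  have h1' : (Real.sqrt 2 : ℂ) * Complex.I * Z = 0 := congrFun h0 1
  have hX : X = 0 := by
    have := congrArg Complex.re (by linear_combination h0' + h2' : (2 : ℂ) * X = 0)
    simpa using this
  have hY : Y = 0 := by
    have := congrArg Complex.im (by linear_combination h2' - h0' : (2 : ℂ) * Complex.I * Y = 0)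
    simpa using this
  have hZ : Z = 0 := by
    rcases mul_eq_zero.mp h1' with h' | h'
    · rcases mul_eq_zero.mp h' with h'' | h''
      · exact absurd h'' (by simp [Complex.ext_iff, Real.sqrt_eq_zero'])
      · exact absurd h'' Complex.I_ne_zero
    · exact_mod_cast h'
  rw [hX, hY, hZ] at h
  norm_num at h

/-- The Chiang-type lagrangian `𝓛₂ ⊆ ℙ(ℂ³)`, in its real description. -/
noncomputable def ChiangL2 : Set (Projectivization ℂ (Fin 3 → ℂ)) :=
  {P | ∃ (X Y Z : ℝ) (h : X ^ 2 + Y ^ 2 + Z ^ 2 = 1),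
    P = Projectivization.mk ℂ (sphereVec X Y Z) (sphereVec_ne_zero h)}

/-- The point of the `SU(2)`-orbit description corresponding to `(α, β)`. -/
noncomputable def orbitVec (α β : ℂ) : Fin 3 → ℂ :=
  ![(starRingEnd ℂ α) ^ 2 + (starRingEnd ℂ β) ^ 2,
    (Real.sqrt 2 : ℂ) * ((starRingEnd ℂ α) * β - α * (starRingEnd ℂ β)),
    α ^ 2 + β ^ 2]

lemma key_identity (α β : ℂ) :
    ‖α ^ 2 + β ^ 2‖ ^ 2 + 4 * ((starRingEnd ℂ α * β).im) ^ 2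
      = (‖α‖ ^ 2 + ‖β‖ ^ 2) ^ 2 := by
  rw [Complex.sq_norm, Complex.sq_norm, Complex.sq_norm]
  simp only [Complex.normSq_apply, Complex.add_re, Complex.add_im, Complex.mul_re,
    Complex.mul_im, Complex.conj_re, Complex.conj_im, pow_two]
  ring

lemma orbitVec_ne_zero {α β : ℂ} (h : ‖α‖ ^ 2 + ‖β‖ ^ 2 = 1) :
    orbitVec α β ≠ 0 := by
  intro h0
  have h2' : α ^ 2 + β ^ 2 = 0 := congrFun h0 2
  have h1' : (Real.sqrt 2 : ℂ) * ((starRingEnd ℂ α) * β - α * (starRingEnd ℂ β)) = 0 :=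
    congrFun h0 1
  have hs : ((starRingEnd ℂ α) * β - α * (starRingEnd ℂ β)) = 0 := by
    rcases mul_eq_zero.mp h1' with h' | h'
    · exact absurd h' (by simp [Complex.ext_iff])
    · exact h'
  have him : (starRingEnd ℂ α * β).im = 0 := by
    have : α * (starRingEnd ℂ β) = starRingEnd ℂ (starRingEnd ℂ α * β) := by
      simp [mul_comm]
    rw [this, sub_eq_zero] at hs
    have h3 := congrArg Complex.im hs
    simp only [Complex.conj_im] at h3
    linarith
  have := key_identity α β
  rw [h2', him, h] at this
  norm_num at this


lemma mk_congr {v w : Fin 3 → ℂ} (hv : v ≠ 0) (h : v = w) :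
    Projectivization.mk ℂ v hv = Projectivization.mk ℂ w (h ▸ hv) := by
  subst h; rfl

/-- The `SU(2)`-orbit description and the real description of the
Chiang-type lagrangian coincide. -/
theorem stmt_0 :
    {P : Projectivization ℂ (Fin 3 → ℂ) |
      ∃ (α β : ℂ) (h : ‖α‖ ^ 2 + ‖β‖ ^ 2 = 1),
        P = Projectivization.mk ℂ (orbitVec α β) (orbitVec_ne_zero h)} = ChiangL2 := by
  ext P
  simp only [Set.mem_setOf_eq, ChiangL2]
  constructor
  · rintro ⟨α, β, h, rfl⟩
    set w := α ^ 2 + β ^ 2 with hw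
    refine ⟨w.re, w.im, 2 * ((starRingEnd ℂ α) * β).im, ?_, ?_⟩
    · have hk := key_identity α β
      rw [h, one_pow] at hk
      have habs : ‖w‖ ^ 2 = w.re ^ 2 + w.im ^ 2 := by
        rw [Complex.sq_norm, Complex.normSq_apply]; ring
      linear_combination hk - habs
    · refine (mk_congr _ ?_).symm.symm
      funext i
      fin_cases i <;>
        simp only [orbitVec, sphereVec, Matrix.cons_val_zero, Matrix.cons_val_one,
          Matrix.head_cons, Matrix.cons_val_two, Matrix.tail_cons] <;>
        · apply Complex.ext <;>
            simp [Complex.ext_iff, Complex.mul_re, Complex.mul_im, hw, pow_two] <;> ring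
  · rintro ⟨X, Y, Z, h, rfl⟩
    by_cases hX : X = 1
    · subst hX
      have hY : Y = 0 := by nlinarith [sq_nonneg Y, sq_nonneg Z]
      have hZ : Z = 0 := by nlinarith [sq_nonneg Y, sq_nonneg Z]
      subst hY; subst hZ
      refine ⟨1, 0, by simp, ?_⟩
      refine (mk_congr _ ?_)
      funext i
      fin_cases i <;> simp [orbitVec, sphereVec]
    · have hXle : X < 1 := by
        rcases lt_or_eq_of_le (show X ≤ 1 by nlinarith [sq_nonneg Y, sq_nonneg Z, sq_nonneg (X-1)]) with h' | h'
        · exact h'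
        · exact absurd h' hX
      set v : ℝ := Real.sqrt ((1 - X) / 2) with hvdef
      have hv2 : v ^ 2 = (1 - X) / 2 := Real.sq_sqrt (by linarith)
      have hvpos : 0 < v := Real.sqrt_pos.mpr (by linarith)
      have hvne : v ≠ 0 := ne_of_gt hvpos
      set u : ℝ := Y / (2 * v) with hudef
      set r : ℝ := Z / (2 * v) with hrdef
      have hu : 2 * u * v = Y := by rw [hudef]; field_simp
      have hr : 2 * r * v = Z := by rw [hrdef]; field_simp
      have hsum : r ^ 2 + u ^ 2 + v ^ 2 = 1 := by
        rw [hudef, hrdef]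
        field_simp
        nlinarith [h, hv2]
      have hXeq : r ^ 2 + u ^ 2 - v ^ 2 = X := by
        have : v ^ 2 = (1 - X) / 2 := hv2
        linarith
      refine ⟨(r : ℂ), (u : ℂ) + (v : ℂ) * Complex.I, ?_, ?_⟩
      · have h1 : ‖((r : ℂ))‖ ^ 2 = r ^ 2 := by
          rw [Complex.sq_norm, Complex.normSq_apply]; simp [pow_two]
        have h2 : ‖((u : ℂ) + (v : ℂ) * Complex.I)‖ ^ 2 = u ^ 2 + v ^ 2 := by
          rw [Complex.sq_norm, Complex.normSq_apply]; simp [pow_two]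
        rw [h1, h2]; linarith
      · refine (mk_congr _ ?_)
        have hrC : 2 * (r : ℂ) * (v : ℂ) = (Z : ℂ) := by exact_mod_cast hr
        have huC : 2 * (u : ℂ) * (v : ℂ) = (Y : ℂ) := by exact_mod_cast hu
        have hXC : (r : ℂ) ^ 2 + (u : ℂ) ^ 2 - (v : ℂ) ^ 2 = (X : ℂ) := by exact_mod_cast hXeq
        have e0 : (starRingEnd ℂ ((r : ℂ))) ^ 2
            + (starRingEnd ℂ ((u : ℂ) + (v : ℂ) * Complex.I)) ^ 2
            = (X : ℂ) - Complex.I * Y := by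
          simp only [map_add, map_mul, Complex.conj_ofReal, Complex.conj_I]
          linear_combination hXC - Complex.I * huC + (v : ℂ) ^ 2 * Complex.I_sq
        have e1 : (Real.sqrt 2 : ℂ) * (starRingEnd ℂ ((r : ℂ)) * ((u : ℂ) + (v : ℂ) * Complex.I)
            - (r : ℂ) * starRingEnd ℂ ((u : ℂ) + (v : ℂ) * Complex.I))
            = (Real.sqrt 2 : ℂ) * Complex.I * Z := by
          simp only [map_add, map_mul, Complex.conj_ofReal, Complex.conj_I]
          linear_combination (Real.sqrt 2 : ℂ) * Complex.I * hrC
        have e2 : ((r : ℂ)) ^ 2 + ((u : ℂ) + (v : ℂ) * Complex.I) ^ 2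
            = (X : ℂ) + Complex.I * Y := by
          linear_combination hXC + Complex.I * huC + (v : ℂ) ^ 2 * Complex.I_sq
        show sphereVec X Y Z = orbitVec ((r : ℂ)) ((u : ℂ) + (v : ℂ) * Complex.I)
        rw [orbitVec, sphereVec, e0, e1, e2]
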